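/- Let t0 > 1 and set γ(t) = t^{−1/2}. Then for every continuous non-increasing function S : [t0,∞) → ℝ with S(t) → 0 as t → +∞ there exist constants H11 and H12, depending only on t0, Λ1, Λ2 and S(t0), such that for every coefficient c in the class PS(t0,Λ1,Λ2,S,γ) with stabilization constant c∞, every λ > 0, and every solution u of u''(t) + λ² c(t) u(t) = 0 on [t0,∞), the Kowaleskian energy E(t) = u'(t)²/√c∞ + λ²√c∞·u(t)² satisfies E(t) ≤ E(t0)·H11·exp( H12·(log t)^{1/2} ) for all t ≥ t0. -/

import Mathlib

open Real Set Filter MeasureTheory Topology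
set_option maxHeartbeats 4000000

lemma gronwall_aux (t0 : ℝ) (f f' g g' : ℝ → ℝ)
    (hf : ∀ t ∈ Ici t0, HasDerivWithinAt f (f' t) (Ici t0) t)
    (hg : ∀ t ∈ Ici t0, HasDerivWithinAt g (g' t) (Ici t0) t)
    (hb : ∀ t ∈ Ici t0, f' t ≤ g' t * f t) :
    ∀ t ∈ Ici t0, f t ≤ f t0 * Real.exp (g t - g t0) := by
  set h : ℝ → ℝ := fun t => f t * Real.exp (-(g t)) with hh_def
  have hh : ∀ t ∈ Ici t0, HasDerivWithinAt h
      ((f' t - g' t * f t) * Real.exp (-(g t))) (Ici t0) t := by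
    intro t ht
    have := (hf t ht).mul (((hg t ht).neg).exp)
    refine this.congr_deriv ?_
    simp only [Pi.neg_apply]
    ring
  have hanti : AntitoneOn h (Ici t0) := by
    apply antitoneOn_of_deriv_nonpos (convex_Ici t0)
    · exact fun t ht => (hh t ht).continuousWithinAt
    · intro t ht
      rw [interior_Ici] at ht
      exact ((hh t (mem_Ici.2 (le_of_lt ht))).hasDerivAt
        (Ici_mem_nhds ht)).differentiableAt.differentiableWithinAt
    · intro t ht
      rw [interior_Ici] at ht
      rw [((hh t (mem_Ici.2 (le_of_lt ht))).hasDerivAt (Ici_mem_nhds ht)).deriv]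
      have h1 := hb t (mem_Ici.2 (le_of_lt ht))
      have h2 : (0:ℝ) < Real.exp (-(g t)) := Real.exp_pos _
      nlinarith
  intro t ht
  have h3 := hanti self_mem_Ici ht ht
  have h4 : (0:ℝ) < Real.exp (-(g t)) := Real.exp_pos _
  simp only [hh_def] at h3
  have h5 : Real.exp (g t - g t0) = Real.exp (-(g t0)) / Real.exp (-(g t)) := by
    rw [← Real.exp_sub]; ring_nf
  rw [h5, ← mul_div_assoc, le_div_iff₀ h4]
  linarith

lemma ftc_within (t0 : ℝ) (f : ℝ → ℝ) (hf : ContinuousOn f (Ici t0)) :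
    ∀ t ∈ Ici t0, HasDerivWithinAt (fun x => ∫ τ in t0..x, f τ) (f t) (Ici t0) t := by
  intro t ht
  have hint : IntervalIntegrable f volume t0 t := by
    apply (hf.mono _).intervalIntegrable
    rw [uIcc_of_le ht]
    exact Icc_subset_Ici_self
  rcases eq_or_lt_of_le (mem_Ici.1 ht) with rfl | hlt
  · exact intervalIntegral.integral_hasDerivWithinAt_right hint
      ⟨Ioi t0, self_mem_nhdsWithin,
        ((hf.mono Ioi_subset_Ici_self).aestronglyMeasurable measurableSet_Ioi)⟩
      ((hf.continuousWithinAt ht).mono Ioi_subset_Ici_self)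
  · have hnb : Ici t0 ∈ 𝓝 t := Ici_mem_nhds hlt
    have hct : ContinuousAt f t := hf.continuousAt hnb
    exact (intervalIntegral.integral_hasDerivAt_right hint
      ⟨Ici t0, hnb, hf.aestronglyMeasurable measurableSet_Ici⟩ hct).hasDerivWithinAt

lemma energy_comp (L1 L2 a b X Y : ℝ) (hL1 : 0 < L1) (ha1 : L1 ≤ a) (ha2 : a ≤ L2)
    (hb1 : L1 ≤ b) (hb2 : b ≤ L2) (hX : 0 ≤ X) (hY : 0 ≤ Y) :
    X / a + Y * a ≤ L2 / L1 * (X / b + Y * b) := by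
  have h0a : 0 < a := lt_of_lt_of_le hL1 ha1
  have h0b : 0 < b := lt_of_lt_of_le hL1 hb1
  have h1 : X / a ≤ L2 / L1 * (X / b) := by
    rw [div_mul_div_comm, div_le_div_iff₀ h0a (by positivity)]
    nlinarith [mul_nonneg (mul_nonneg hX (sub_nonneg.2 ha1)) h0b.le,
      mul_nonneg (mul_nonneg hX (sub_nonneg.2 hb2)) h0a.le]
  have h2 : Y * a ≤ L2 / L1 * (Y * b) := by
    rw [div_mul_eq_mul_div, le_div_iff₀ hL1]
    nlinarith [mul_nonneg (mul_nonneg hY (sub_nonneg.2 ha2)) hL1.le,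
      mul_nonneg (mul_nonneg hY (sub_nonneg.2 hb1)) (le_trans hL1.le (le_trans ha1 ha2))]
  calc X / a + Y * a ≤ L2/L1 * (X/b) + L2/L1 * (Y*b) := by linarith
  _ = L2 / L1 * (X / b + Y * b) := by ring

/-- The Kowaleskian energy `E(t) = u'(t)²/√c∞ + λ²·√c∞·u(t)²`. -/
noncomputable def kowE (cinf lam : ℝ) (u u' : ℝ → ℝ) (t : ℝ) : ℝ :=
  (u' t) ^ 2 / Real.sqrt cinf + lam ^ 2 * Real.sqrt cinf * (u t) ^ 2

theorem energy_growth_case_beta_eq_half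
    (t0 Λ1 Λ2 : ℝ) (ht0 : 1 < t0) (hΛ1 : 0 < Λ1) (hΛ12 : Λ1 ≤ Λ2)
    (S : ℝ → ℝ)
    (hS_cont : ContinuousOn S (Ici t0)) (hS_anti : AntitoneOn S (Ici t0))
    (hS_lim : Tendsto S atTop (nhds 0)) :
    ∃ H11 H12 : ℝ,
      ∀ (c c' c'' : ℝ → ℝ) (cinf : ℝ),
        (∀ t ∈ Ici t0, HasDerivWithinAt c (c' t) (Ici t0) t) →
        (∀ t ∈ Ici t0, HasDerivWithinAt c' (c'' t) (Ici t0) t) →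
        ContinuousOn c'' (Ici t0) →
        (∀ t ∈ Ici t0, Λ1 ≤ c t ∧ c t ≤ Λ2) →
        cinf ∈ Icc Λ1 Λ2 →
        (∀ t ∈ Ici t0, ∀ b ≥ t, (∫ τ in t..b, |c τ - cinf|) ≤ S t) →
        (∀ t ∈ Ici t0,
          |c' t| ≤ t ^ (-(1 : ℝ) / 2) ∧ |c'' t| ≤ (t ^ (-(1 : ℝ) / 2)) ^ 2) →
        ∀ lam : ℝ, 0 < lam →
        ∀ u u' : ℝ → ℝ,
          (∀ t ∈ Ici t0, HasDerivWithinAt u (u' t) (Ici t0) t) →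
          (∀ t ∈ Ici t0, HasDerivWithinAt u' (-(lam ^ 2 * c t * u t)) (Ici t0) t) →
          ∀ t ∈ Ici t0,
            kowE cinf lam u u' t ≤
              kowE cinf lam u u' t0 * H11 *
                Real.exp (H12 * Real.sqrt (Real.log t)) := by
  have hΛ2 : 0 < Λ2 := lt_of_lt_of_le hΛ1 hΛ12
  obtain ⟨L1, hL1def⟩ : ∃ x : ℝ, x = Real.sqrt Λ1 := ⟨_, rfl⟩
  obtain ⟨L2, hL2def⟩ : ∃ x : ℝ, x = Real.sqrt Λ2 := ⟨_, rfl⟩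
  have hL1 : 0 < L1 := hL1def ▸ Real.sqrt_pos.2 hΛ1
  have hL2 : 0 < L2 := hL2def ▸ Real.sqrt_pos.2 hΛ2
  have hL12 : L1 ≤ L2 := by rw [hL1def, hL2def]; exact Real.sqrt_le_sqrt hΛ12
  obtain ⟨ρ, hρdef⟩ : ∃ x : ℝ, x = L2 / L1 := ⟨_, rfl⟩
  have hρ1 : 1 ≤ ρ := by rw [hρdef]; exact (one_le_div hL1).2 hL12
  obtain ⟨M, hMdef⟩ : ∃ x : ℝ, x = 1 / (2 * Λ1 * L1) := ⟨_, rfl⟩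
  obtain ⟨M', hM'def⟩ : ∃ x : ℝ, x = 1 / (2 * Λ1 * L1) + 3 / (4 * Λ1 ^ 2 * L1) := ⟨_, rfl⟩
  obtain ⟨N, hNdef⟩ : ∃ x : ℝ, x = (L2 + 1 / L1) / 2 := ⟨_, rfl⟩
  have hM : 0 < M := by rw [hMdef]; positivity
  have hM' : 0 < M' := by rw [hM'def]; positivity
  have hN : 0 < N := by rw [hNdef]; positivity
  obtain ⟨lam0, hlam0def⟩ : ∃ x : ℝ, x = 4 * M * N := ⟨_, rfl⟩
  have hlam0pos : 0 < lam0 := by rw [hlam0def]; positivity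
  obtain ⟨K2, hK2def⟩ : ∃ x : ℝ, x = 1 + 1 / Λ1 := ⟨_, rfl⟩
  have hK2 : 0 < K2 := by rw [hK2def]; positivity
  obtain ⟨CB, hCBdef⟩ : ∃ x : ℝ, x = (4 / 3) * M' * N := ⟨_, rfl⟩
  have hCB : 0 < CB := by rw [hCBdef]; positivity
  obtain ⟨S0, hS0def⟩ : ∃ x : ℝ, x = S t0 := ⟨_, rfl⟩
  have hS0 : 0 ≤ S0 := by
    rw [hS0def]
    refine le_of_tendsto hS_lim ?_
    filter_upwards [eventually_ge_atTop t0] with b hb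
    exact hS_anti self_mem_Ici hb hb
  refine ⟨(2 * ρ ^ 2 + 1) * Real.exp (K2 * S0 * lam0), K2 * S0 + CB, ?_⟩
  intro c c' c'' cinf hc hc' hc''cont hcb hcinf hstab hgam lam hlam u u' hu hu'
  -- basic facts about cinf
  have hcinf1 : Λ1 ≤ cinf := hcinf.1
  have hcinf2 : cinf ≤ Λ2 := hcinf.2
  have hcinfpos : 0 < cinf := lt_of_lt_of_le hΛ1 hcinf1
  obtain ⟨s, hsdef⟩ : ∃ x : ℝ, x = Real.sqrt cinf := ⟨_, rfl⟩
  have hs : 0 < s := hsdef ▸ Real.sqrt_pos.2 hcinfpos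
  have hs1 : L1 ≤ s := by rw [hsdef, hL1def]; exact Real.sqrt_le_sqrt hcinf1
  have hs2 : s ≤ L2 := by rw [hsdef, hL2def]; exact Real.sqrt_le_sqrt hcinf2
  have hssq : s ^ 2 = cinf := by rw [hsdef]; exact Real.sq_sqrt hcinfpos.le
  set E : ℝ → ℝ := kowE cinf lam u u' with hEdef
  have hEx : ∀ x, E x = (u' x) ^ 2 / s + lam ^ 2 * s * (u x) ^ 2 := by
    intro x
    simp only [hEdef, kowE, ← hsdef]

  have hE_nonneg : ∀ x, 0 ≤ E x := by
    intro x; rw [hEx]; positivity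
  -- continuity of c
  have hc_cont : ContinuousOn c (Ici t0) := fun x hx => (hc x hx).continuousWithinAt
  ---------------------------------------------------------------
  -- Bound A : E t ≤ E t0 * exp (K2 * lam * S0), for all t
  ---------------------------------------------------------------
  have hK2ge1 : 1 ≤ K2 := by
    have h0 : (0:ℝ) ≤ 1 / Λ1 := by positivity
    rw [hK2def]
    linarith
  have hK2cinf : 1 ≤ K2 * cinf := by
    have h1 : (1:ℝ) ≤ cinf / Λ1 := (one_le_div hΛ1).2 hcinf1
    have h2 : K2 * cinf = cinf + cinf / Λ1 := by rw [hK2def]; ring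
    linarith
  have hEs : ∀ x, E x * s = u' x ^ 2 + lam ^ 2 * cinf * u x ^ 2 := by
    intro x
    rw [hEx x, add_mul, div_mul_cancel₀ _ hs.ne']
    linear_combination lam ^ 2 * u x ^ 2 * hssq
  have boundA : ∀ t ∈ Ici t0, E t ≤ E t0 * Real.exp (K2 * lam * S0) := by
    have habs_cont : ContinuousOn (fun τ => |c τ - cinf|) (Ici t0) :=
      (hc_cont.sub continuousOn_const).abs
    have hI := ftc_within t0 _ habs_cont
    have hE_deriv : ∀ x ∈ Ici t0, HasDerivWithinAt E
        (2 * lam ^ 2 * (cinf - c x) / s * (u x * u' x)) (Ici t0) x := by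
      intro x hx
      have h1 : HasDerivWithinAt (fun y => (u' y) ^ 2 / s)
          (((2:ℕ) * u' x ^ (2-1) * (-(lam ^ 2 * c x * u x))) / s) (Ici t0) x :=
        ((hu' x hx).pow 2).div_const s
      have h2 : HasDerivWithinAt (fun y => lam ^ 2 * s * (u y) ^ 2)
          (lam ^ 2 * s * ((2:ℕ) * u x ^ (2-1) * u' x)) (Ici t0) x :=
        ((hu x hx).pow 2).const_mul (lam ^ 2 * s)
      have h3 := h1.add h2
      have hfun : E = fun y => (u' y) ^ 2 / s + lam ^ 2 * s * (u y) ^ 2 := funext hEx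
      rw [hfun]
      refine h3.congr_deriv ?_
      rw [show cinf = s ^ 2 from hssq.symm]
      field_simp
      ring
    have hg_deriv : ∀ x ∈ Ici t0, HasDerivWithinAt
        (fun y => K2 * lam * ∫ τ in t0..y, |c τ - cinf|)
        (K2 * lam * |c x - cinf|) (Ici t0) x :=
      fun x hx => (hI x hx).const_mul (K2 * lam)
    have hbnd : ∀ x ∈ Ici t0,
        2 * lam ^ 2 * (cinf - c x) / s * (u x * u' x) ≤
          (K2 * lam * |c x - cinf|) * E x := by
      intro x hx
      have hA0 : 0 ≤ |c x - cinf| := abs_nonneg _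
      have hA1 : cinf - c x ≤ |c x - cinf| := by rw [abs_sub_comm]; exact le_abs_self _
      have hA2 : -(|c x - cinf|) ≤ cinf - c x := by rw [abs_sub_comm]; exact neg_abs_le _
      rw [div_mul_eq_mul_div, div_le_iff₀ hs]
      have step1 : 2 * lam ^ 2 * (cinf - c x) * (u x * u' x) ≤
          lam * |c x - cinf| * (u' x ^ 2 + lam ^ 2 * u x ^ 2) := by
        nlinarith [mul_nonneg (mul_nonneg hlam.le
            (by linarith : (0:ℝ) ≤ |c x - cinf| + (cinf - c x))) (sq_nonneg (u' x - lam * u x)),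
          mul_nonneg (mul_nonneg hlam.le
            (by linarith : (0:ℝ) ≤ |c x - cinf| - (cinf - c x))) (sq_nonneg (u' x + lam * u x))]
      have step2 : lam * |c x - cinf| * (u' x ^ 2 + lam ^ 2 * u x ^ 2) ≤
          K2 * lam * |c x - cinf| * (u' x ^ 2 + lam ^ 2 * cinf * u x ^ 2) := by
        nlinarith [mul_nonneg (mul_nonneg hlam.le hA0)
            (mul_nonneg (sub_nonneg.2 hK2ge1) (sq_nonneg (u' x))),
          mul_nonneg (mul_nonneg hlam.le hA0)
            (mul_nonneg (sub_nonneg.2 hK2cinf) (mul_nonneg (sq_nonneg lam) (sq_nonneg (u x))))]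
      have heq : K2 * lam * |c x - cinf| * E x * s =
          K2 * lam * |c x - cinf| * (u' x ^ 2 + lam ^ 2 * cinf * u x ^ 2) := by
        rw [mul_assoc (K2 * lam * |c x - cinf|) (E x) s, hEs x]
      linarith
    have hgron := gronwall_aux t0 E
      (fun x => 2 * lam ^ 2 * (cinf - c x) / s * (u x * u' x))
      (fun y => K2 * lam * ∫ τ in t0..y, |c τ - cinf|)
      (fun x => K2 * lam * |c x - cinf|) hE_deriv hg_deriv hbnd
    intro t ht
    have h4 := hgron t ht
    refine le_trans h4 ?_
    apply mul_le_mul_of_nonneg_left _ (hE_nonneg t0)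
    apply Real.exp_le_exp.2
    simp only [intervalIntegral.integral_same, mul_zero, sub_zero]
    rw [hS0def]
    exact mul_le_mul_of_nonneg_left (hstab t0 self_mem_Ici t ht) (by positivity)
  ---------------------------------------------------------------
  -- Bound B : for lam ≥ lam0
  ---------------------------------------------------------------
  have boundB : lam0 ≤ lam → ∀ t ∈ Ici t0,
      E t ≤ 5 / 3 * ρ ^ 2 * E t0 * Real.exp (CB / lam * Real.log t) := by
    intro hlamge
    have hlam4MN : 4 * (M * N) ≤ lam := by rw [hlam0def] at hlamge; linarith [hlamge]
    have hcpos : ∀ x ∈ Ici t0, 0 < c x := fun x hx => lt_of_lt_of_le hΛ1 (hcb x hx).1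
    obtain ⟨sc, hscdef⟩ : ∃ f : ℝ → ℝ, f = fun x => Real.sqrt (c x) := ⟨_, rfl⟩
    have hscx : ∀ x, sc x = Real.sqrt (c x) := fun x => by rw [hscdef]
    have hscpos : ∀ x ∈ Ici t0, 0 < sc x := fun x hx => by
      rw [hscx]; exact Real.sqrt_pos.2 (hcpos x hx)
    have hsc1 : ∀ x ∈ Ici t0, L1 ≤ sc x := fun x hx => by
      rw [hscx, hL1def]; exact Real.sqrt_le_sqrt (hcb x hx).1
    have hsc2 : ∀ x ∈ Ici t0, sc x ≤ L2 := fun x hx => by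
      rw [hscx, hL2def]; exact Real.sqrt_le_sqrt (hcb x hx).2
    have hscsq : ∀ x ∈ Ici t0, sc x ^ 2 = c x := fun x hx => by
      rw [hscx]; exact Real.sq_sqrt (hcpos x hx).le
    have hsc_d : ∀ x ∈ Ici t0, HasDerivWithinAt sc (c' x / (2 * sc x)) (Ici t0) x := by
      intro x hx
      rw [hscdef]
      exact (hc x hx).sqrt (ne_of_gt (hcpos x hx))
    obtain ⟨Ec, hEcdef⟩ : ∃ f : ℝ → ℝ,
        f = fun x => u' x ^ 2 / sc x + lam ^ 2 * (sc x * u x ^ 2) := ⟨_, rfl⟩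
    have hEcx : ∀ x, Ec x = u' x ^ 2 / sc x + lam ^ 2 * (sc x * u x ^ 2) := fun x => by
      rw [hEcdef]
    obtain ⟨G, hGdef⟩ : ∃ f : ℝ → ℝ,
        f = fun x => u' x ^ 2 / sc x + lam ^ 2 * (sc x * u x ^ 2) +
          c' x / (2 * (c x * sc x)) * (u x * u' x) := ⟨_, rfl⟩
    have hGx : ∀ x, G x = Ec x + c' x / (2 * (c x * sc x)) * (u x * u' x) := fun x => by
      rw [hGdef, hEcx]
    have hEc_nonneg : ∀ x ∈ Ici t0, 0 ≤ Ec x := by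
      intro x hx
      rw [hEcx]
      have h1 := hscpos x hx
      positivity
    -- pointwise component bounds
    have h_u'sq : ∀ x ∈ Ici t0, u' x ^ 2 ≤ L2 * Ec x := by
      intro x hx
      have h1 : u' x ^ 2 / L2 ≤ u' x ^ 2 / sc x :=
        div_le_div_of_nonneg_left (sq_nonneg _) (hscpos x hx) (hsc2 x hx)
      have h2 : u' x ^ 2 / sc x ≤ Ec x := by
        rw [hEcx]
        have h3 : 0 ≤ lam ^ 2 * (sc x * u x ^ 2) := by
          have := (hscpos x hx).le; positivity
        linarith
      calc u' x ^ 2 = L2 * (u' x ^ 2 / L2) := by field_simp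
        _ ≤ L2 * (u' x ^ 2 / sc x) := mul_le_mul_of_nonneg_left h1 hL2.le
        _ ≤ L2 * Ec x := mul_le_mul_of_nonneg_left h2 hL2.le
    have h_usq : ∀ x ∈ Ici t0, lam ^ 2 * u x ^ 2 ≤ Ec x / L1 := by
      intro x hx
      rw [le_div_iff₀ hL1, hEcx]
      have h1 : L1 * (lam ^ 2 * u x ^ 2) ≤ sc x * (lam ^ 2 * u x ^ 2) :=
        mul_le_mul_of_nonneg_right (hsc1 x hx) (by positivity)
      have h2 : 0 ≤ u' x ^ 2 / sc x := div_nonneg (sq_nonneg _) (hscpos x hx).le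
      linarith [h1, h2]
    have huub : ∀ x ∈ Ici t0, |u x * u' x| ≤ N / lam * Ec x := by
      intro x hx
      have key : 2 * lam * |u x * u' x| ≤ u' x ^ 2 + lam ^ 2 * u x ^ 2 := by
        rw [abs_mul]
        nlinarith [sq_nonneg (|u' x| - lam * |u x|), sq_abs (u' x), sq_abs (u x),
          abs_nonneg (u x), abs_nonneg (u' x)]
      have heq : N / lam * Ec x = N * Ec x / lam := by ring
      rw [heq, le_div_iff₀ hlam]
      rw [hNdef]
      have h3 : lam ^ 2 * u x ^ 2 ≤ Ec x * (1 / L1) := by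
        rw [mul_one_div]; exact h_usq x hx
      linarith [key, h_u'sq x hx, h3]
    have hone_le : ∀ x ∈ Ici t0, x ^ (-(1:ℝ) / 2) ≤ 1 := by
      intro x hx
      exact Real.rpow_le_one_of_one_le_of_nonpos
        (le_trans ht0.le hx) (by norm_num)
    have hxpos : ∀ x ∈ Ici t0, (0:ℝ) < x := fun x hx =>
      lt_trans one_pos (lt_of_lt_of_le ht0 hx)
    have hpow : ∀ x ∈ Ici t0, (x ^ (-(1:ℝ) / 2)) ^ 2 = x⁻¹ := by
      intro x hx
      rw [← Real.rpow_natCast (x ^ (-(1:ℝ)/2)) 2, ← Real.rpow_mul (hxpos x hx).le]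
      have he : (-(1:ℝ) / 2 * (2:ℕ) : ℝ) = -1 := by push_cast; ring
      rw [he, Real.rpow_neg_one]
    have hden1 : ∀ x ∈ Ici t0, 2 * Λ1 * L1 ≤ 2 * (c x * sc x) := by
      intro x hx
      have h1 := (hcb x hx).1
      have h2 := hsc1 x hx
      have h3 : Λ1 * L1 ≤ c x * sc x :=
        mul_le_mul h1 h2 hL1.le (hΛ1.le.trans h1)
      linarith
    have hden2 : ∀ x ∈ Ici t0, 4 * Λ1 ^ 2 * L1 ≤ 4 * (c x ^ 2 * sc x) := by
      intro x hx
      have h1 := (hcb x hx).1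
      have h2 := hsc1 x hx
      have h0 : Λ1 ^ 2 ≤ c x ^ 2 := pow_le_pow_left₀ hΛ1.le h1 2
      have h3 : Λ1 ^ 2 * L1 ≤ c x ^ 2 * sc x :=
        mul_le_mul h0 h2 hL1.le (by positivity)
      linarith
    have hφb : ∀ x ∈ Ici t0, |c' x / (2 * (c x * sc x))| ≤ M := by
      intro x hx
      have hden : (0:ℝ) < 2 * (c x * sc x) := by
        have := hcpos x hx; have := hscpos x hx; positivity
      rw [abs_div, abs_of_pos hden, hMdef]
      exact div_le_div₀ zero_le_one ((hgam x hx).1.trans (hone_le x hx)) (by positivity)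
        (hden1 x hx)
    have hφ'b : ∀ x ∈ Ici t0,
        |c'' x / (2 * (c x * sc x)) - 3 * c' x ^ 2 / (4 * (c x ^ 2 * sc x))| ≤ M' / x := by
      intro x hx
      have hcx := hcpos x hx
      have hscxp := hscpos x hx
      have hx0 := hxpos x hx
      have hden : (0:ℝ) < 2 * (c x * sc x) := by positivity
      have hden' : (0:ℝ) < 4 * (c x ^ 2 * sc x) := by positivity
      have hc'' : |c'' x| ≤ x⁻¹ := by
        have := (hgam x hx).2
        rw [hpow x hx] at this
        exact this
      have hc'sq : c' x ^ 2 ≤ x⁻¹ := by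
        have h1 := (hgam x hx).1
        calc c' x ^ 2 = |c' x| ^ 2 := (sq_abs _).symm
          _ ≤ (x ^ (-(1:ℝ)/2)) ^ 2 := by
              apply pow_le_pow_left₀ (abs_nonneg _) h1
          _ = x⁻¹ := hpow x hx
      have htri : |c'' x / (2 * (c x * sc x)) - 3 * c' x ^ 2 / (4 * (c x ^ 2 * sc x))| ≤
          |c'' x| / (2 * (c x * sc x)) + 3 * c' x ^ 2 / (4 * (c x ^ 2 * sc x)) := by
        refine (abs_sub _ _).trans ?_
        rw [abs_div, abs_of_pos hden, abs_div, abs_of_pos hden']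
        have : |3 * c' x ^ 2| = 3 * c' x ^ 2 := abs_of_nonneg (by positivity)
        rw [this]
      have hb1 : |c'' x| / (2 * (c x * sc x)) ≤ x⁻¹ / (2 * Λ1 * L1) :=
        div_le_div₀ (by positivity) hc'' (by positivity) (hden1 x hx)
      have hb2 : 3 * c' x ^ 2 / (4 * (c x ^ 2 * sc x)) ≤ 3 * x⁻¹ / (4 * Λ1 ^ 2 * L1) :=
        div_le_div₀ (by positivity) (by linarith) (by positivity) (hden2 x hx)
      have heq : M' / x = x⁻¹ / (2 * Λ1 * L1) + 3 * x⁻¹ / (4 * Λ1 ^ 2 * L1) := by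
        rw [hM'def]
        field_simp
      rw [heq]
      linarith
    -- derivative of G
    have hG_d : ∀ x ∈ Ici t0, HasDerivWithinAt G
        ((c'' x / (2 * (c x * sc x)) - 3 * c' x ^ 2 / (4 * (c x ^ 2 * sc x))) *
          (u x * u' x)) (Ici t0) x := by
      intro x hx
      have hcx := hcpos x hx
      have hscxp := hscpos x hx
      have hdenne : (2 : ℝ) * (c x * sc x) ≠ 0 := by positivity
      have h1 := ((hu' x hx).pow 2).div (hsc_d x hx) hscxp.ne'
      have h2 := ((hsc_d x hx).mul ((hu x hx).pow 2)).const_mul (lam ^ 2)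
      have h3 := ((hc x hx).mul (hsc_d x hx)).const_mul (2 : ℝ)
      have h4 := (hc' x hx).div h3 hdenne
      have h5 := (hu x hx).mul (hu' x hx)
      have h6 := (h1.add h2).add (h4.mul h5)
      rw [hGdef]
      refine h6.congr_deriv ?_
      simp only [Pi.mul_apply, Pi.div_apply, Pi.pow_apply]
      rw [show c x = sc x ^ 2 from (hscsq x hx).symm]
      have hne := hscxp.ne'
      field_simp
      ring
    -- comparison G vs Ec
    have hGcomp : ∀ x ∈ Ici t0, 3 / 4 * Ec x ≤ G x ∧ G x ≤ 5 / 4 * Ec x := by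
      intro x hx
      have habs : |c' x / (2 * (c x * sc x)) * (u x * u' x)| ≤ 1 / 4 * Ec x := by
        calc |c' x / (2 * (c x * sc x)) * (u x * u' x)|
            = |c' x / (2 * (c x * sc x))| * |u x * u' x| := abs_mul _ _
          _ ≤ M * (N / lam * Ec x) :=
              mul_le_mul (hφb x hx) (huub x hx) (abs_nonneg _) hM.le
          _ ≤ 1 / 4 * Ec x := by
              have heq : M * (N / lam * Ec x) = M * N * Ec x / lam := by ring
              rw [heq, div_le_iff₀ hlam]
              linarith only [mul_nonneg (hEc_nonneg x hx) (sub_nonneg.2 hlam4MN)]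
      obtain ⟨hab1, hab2⟩ := abs_le.1 habs
      constructor <;> [skip; skip] <;> rw [hGx] <;> linarith
    -- Gronwall for G
    have hg_d : ∀ x ∈ Ici t0, HasDerivWithinAt (fun y => CB / lam * Real.log y)
        (CB / lam * x⁻¹) (Ici t0) x := fun x hx =>
      ((Real.hasDerivAt_log (hxpos x hx).ne').hasDerivWithinAt).const_mul (CB / lam)
    have hbnd : ∀ x ∈ Ici t0,
        (c'' x / (2 * (c x * sc x)) - 3 * c' x ^ 2 / (4 * (c x ^ 2 * sc x))) *
          (u x * u' x) ≤ (CB / lam * x⁻¹) * G x := by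
      intro x hx
      have hx0 := hxpos x hx
      have l1 : (c'' x / (2 * (c x * sc x)) - 3 * c' x ^ 2 / (4 * (c x ^ 2 * sc x))) *
          (u x * u' x) ≤
          |c'' x / (2 * (c x * sc x)) - 3 * c' x ^ 2 / (4 * (c x ^ 2 * sc x))| *
            |u x * u' x| := by
        rw [← abs_mul]
        exact le_abs_self _
      have l2 : |c'' x / (2 * (c x * sc x)) - 3 * c' x ^ 2 / (4 * (c x ^ 2 * sc x))| *
          |u x * u' x| ≤ (M' / x) * (N / lam * Ec x) :=
        mul_le_mul (hφ'b x hx) (huub x hx) (abs_nonneg _) (by positivity)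
      have hEcG : Ec x ≤ 4 / 3 * G x := by linarith [(hGcomp x hx).1]
      have l3 : (M' / x) * (N / lam * Ec x) ≤ (CB / lam * x⁻¹) * G x := by
        calc (M' / x) * (N / lam * Ec x) = M' * N / (x * lam) * Ec x := by
              field_simp
          _ ≤ M' * N / (x * lam) * (4 / 3 * G x) :=
              mul_le_mul_of_nonneg_left hEcG (by positivity)
          _ = (CB / lam * x⁻¹) * G x := by
              rw [hCBdef]
              field_simp
      linarith
    have hgron := gronwall_aux t0 G
      (fun x => (c'' x / (2 * (c x * sc x)) - 3 * c' x ^ 2 / (4 * (c x ^ 2 * sc x))) *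
        (u x * u' x))
      (fun y => CB / lam * Real.log y)
      (fun x => CB / lam * x⁻¹) hG_d hg_d hbnd
    -- conclusion of bound B
    intro t ht
    have hρ0 : (0:ℝ) ≤ ρ := le_trans zero_le_one hρ1
    have hEρ : E t ≤ ρ * Ec t := by
      have hcomp := energy_comp L1 L2 s (sc t) (u' t ^ 2) (lam ^ 2 * u t ^ 2) hL1 hs1 hs2
        (hsc1 t ht) (hsc2 t ht) (sq_nonneg _) (by positivity)
      rw [hEx t, hEcx t, hρdef]
      calc u' t ^ 2 / s + lam ^ 2 * s * u t ^ 2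
          = u' t ^ 2 / s + lam ^ 2 * u t ^ 2 * s := by ring
        _ ≤ L2 / L1 * (u' t ^ 2 / sc t + lam ^ 2 * u t ^ 2 * sc t) := hcomp
        _ = L2 / L1 * (u' t ^ 2 / sc t + lam ^ 2 * (sc t * u t ^ 2)) := by ring
    have hEcρ : Ec t0 ≤ ρ * E t0 := by
      have hcomp := energy_comp L1 L2 (sc t0) s (u' t0 ^ 2) (lam ^ 2 * u t0 ^ 2) hL1
        (hsc1 t0 self_mem_Ici) (hsc2 t0 self_mem_Ici) hs1 hs2 (sq_nonneg _) (by positivity)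
      rw [hEx t0, hEcx t0, hρdef]
      calc u' t0 ^ 2 / sc t0 + lam ^ 2 * (sc t0 * u t0 ^ 2)
          = u' t0 ^ 2 / sc t0 + lam ^ 2 * u t0 ^ 2 * sc t0 := by ring
        _ ≤ L2 / L1 * (u' t0 ^ 2 / s + lam ^ 2 * u t0 ^ 2 * s) := hcomp
        _ = L2 / L1 * (u' t0 ^ 2 / s + lam ^ 2 * s * u t0 ^ 2) := by ring
    have hEcG_t : Ec t ≤ 4 / 3 * G t := by linarith [(hGcomp t ht).1]
    have hG_t0 : G t0 ≤ 5 / 4 * Ec t0 := (hGcomp t0 self_mem_Ici).2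
    have m1 := hgron t ht
    have hexp0 : (0:ℝ) ≤ Real.exp (CB / lam * Real.log t - CB / lam * Real.log t0) :=
      (Real.exp_pos _).le
    have m2 : Real.exp (CB / lam * Real.log t - CB / lam * Real.log t0) ≤
        Real.exp (CB / lam * Real.log t) := by
      apply Real.exp_le_exp.2
      have h0 : (0:ℝ) ≤ CB / lam * Real.log t0 :=
        mul_nonneg (by positivity) (Real.log_nonneg ht0.le)
      linarith
    have hE00 : (0:ℝ) ≤ E t0 := hE_nonneg t0
    calc E t ≤ ρ * Ec t := hEρ
      _ ≤ ρ * (4 / 3 * G t) := mul_le_mul_of_nonneg_left hEcG_t hρ0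
      _ ≤ ρ * (4 / 3 * (G t0 * Real.exp (CB / lam * Real.log t - CB / lam * Real.log t0))) := by
          apply mul_le_mul_of_nonneg_left _ hρ0
          apply mul_le_mul_of_nonneg_left m1 (by norm_num)
      _ ≤ ρ * (4 / 3 * ((5 / 4 * (ρ * E t0)) *
            Real.exp (CB / lam * Real.log t - CB / lam * Real.log t0))) := by
          apply mul_le_mul_of_nonneg_left _ hρ0
          apply mul_le_mul_of_nonneg_left _ (by norm_num)
          apply mul_le_mul_of_nonneg_right _ hexp0
          linarith
      _ = 5 / 3 * ρ ^ 2 * E t0 * Real.exp (CB / lam * Real.log t - CB / lam * Real.log t0) := by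
          ring
      _ ≤ 5 / 3 * ρ ^ 2 * E t0 * Real.exp (CB / lam * Real.log t) := by
          apply mul_le_mul_of_nonneg_left m2
          have h9 : (0:ℝ) ≤ ρ ^ 2 := sq_nonneg _
          exact mul_nonneg (mul_nonneg (by norm_num) h9) hE00
  ---------------------------------------------------------------
  -- Conclusion
  ---------------------------------------------------------------
  intro t ht
  have ht1 : 1 < t := lt_of_lt_of_le ht0 ht
  have hlogt : 0 < Real.log t := Real.log_pos ht1
  have hsqlog : 0 < Real.sqrt (Real.log t) := Real.sqrt_pos.2 hlogt
  have hE0 : 0 ≤ E t0 := hE_nonneg t0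
  by_cases hcase : lam ≤ lam0 + Real.sqrt (Real.log t)
  · have h1 := boundA t ht
    have h2 : K2 * lam * S0 ≤ K2 * S0 * lam0 + K2 * S0 * Real.sqrt (Real.log t) := by
      have hp := mul_le_mul_of_nonneg_left hcase (mul_nonneg hK2.le hS0)
      linarith only [hp]
    calc E t ≤ E t0 * Real.exp (K2 * lam * S0) := h1
      _ ≤ E t0 * (Real.exp (K2 * S0 * lam0) * Real.exp (K2 * S0 * Real.sqrt (Real.log t))) := by
          rw [← Real.exp_add]
          exact mul_le_mul_of_nonneg_left (Real.exp_le_exp.2 h2) hE0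
      _ ≤ E t0 * ((2 * ρ ^ 2 + 1) * Real.exp (K2 * S0 * lam0)) *
            Real.exp ((K2 * S0 + CB) * Real.sqrt (Real.log t)) := by
          have e1 : Real.exp (K2 * S0 * lam0) ≤ (2 * ρ ^ 2 + 1) * Real.exp (K2 * S0 * lam0) :=
            le_mul_of_one_le_left (Real.exp_pos _).le (by linarith only [sq_nonneg ρ])
          have e2 : Real.exp (K2 * S0 * Real.sqrt (Real.log t)) ≤
              Real.exp ((K2 * S0 + CB) * Real.sqrt (Real.log t)) := by
            apply Real.exp_le_exp.2
            linarith only [mul_nonneg hCB.le hsqlog.le]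
          calc E t0 * (Real.exp (K2 * S0 * lam0) * Real.exp (K2 * S0 * Real.sqrt (Real.log t)))
              ≤ E t0 * ((2 * ρ ^ 2 + 1) * Real.exp (K2 * S0 * lam0) *
                Real.exp ((K2 * S0 + CB) * Real.sqrt (Real.log t))) := by
                apply mul_le_mul_of_nonneg_left _ hE0
                exact mul_le_mul e1 e2 (Real.exp_pos _).le (by positivity)
            _ = E t0 * ((2 * ρ ^ 2 + 1) * Real.exp (K2 * S0 * lam0)) *
                Real.exp ((K2 * S0 + CB) * Real.sqrt (Real.log t)) := by ring
  · push_neg at hcase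
    have hlamlam0 : lam0 ≤ lam := le_of_lt (lt_of_le_of_lt (le_add_of_nonneg_right hsqlog.le) hcase)
    have hlamsq : Real.sqrt (Real.log t) ≤ lam :=
      le_of_lt (lt_of_le_of_lt (le_add_of_nonneg_left hlam0pos.le) hcase)
    have h1 := boundB hlamlam0 t ht
    have h2 : CB / lam * Real.log t ≤ CB * Real.sqrt (Real.log t) := by
      have hsq2 : Real.sqrt (Real.log t) * Real.sqrt (Real.log t) = Real.log t :=
        Real.mul_self_sqrt hlogt.le
      have h3 : Real.log t / lam ≤ Real.sqrt (Real.log t) := by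
        rw [div_le_iff₀ hlam]
        calc Real.log t = Real.sqrt (Real.log t) * Real.sqrt (Real.log t) := hsq2.symm
          _ ≤ Real.sqrt (Real.log t) * lam := mul_le_mul_of_nonneg_left hlamsq hsqlog.le
      calc CB / lam * Real.log t = CB * (Real.log t / lam) := by ring
        _ ≤ CB * Real.sqrt (Real.log t) := mul_le_mul_of_nonneg_left h3 hCB.le
    calc E t ≤ 5 / 3 * ρ ^ 2 * E t0 * Real.exp (CB / lam * Real.log t) := h1
      _ ≤ E t0 * ((2 * ρ ^ 2 + 1) * Real.exp (K2 * S0 * lam0)) *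
            Real.exp ((K2 * S0 + CB) * Real.sqrt (Real.log t)) := by
          have e1 : Real.exp (CB / lam * Real.log t) ≤
              Real.exp ((K2 * S0 + CB) * Real.sqrt (Real.log t)) := by
            apply Real.exp_le_exp.2
            linarith only [h2, mul_nonneg (mul_nonneg hK2.le hS0) hsqlog.le]
          have e2 : (5 : ℝ) / 3 * ρ ^ 2 ≤ (2 * ρ ^ 2 + 1) * Real.exp (K2 * S0 * lam0) := by
            have hone : (1:ℝ) ≤ Real.exp (K2 * S0 * lam0) := Real.one_le_exp (by positivity)
            calc (5 : ℝ) / 3 * ρ ^ 2 ≤ 2 * ρ ^ 2 + 1 := by linarith only [sq_nonneg ρ]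
              _ ≤ (2 * ρ ^ 2 + 1) * Real.exp (K2 * S0 * lam0) :=
                  le_mul_of_one_le_right (by positivity) hone
          calc 5 / 3 * ρ ^ 2 * E t0 * Real.exp (CB / lam * Real.log t)
              ≤ (2 * ρ ^ 2 + 1) * Real.exp (K2 * S0 * lam0) * E t0 *
                Real.exp ((K2 * S0 + CB) * Real.sqrt (Real.log t)) := by
                apply mul_le_mul _ e1 (Real.exp_pos _).le (by positivity)
                exact mul_le_mul_of_nonneg_right e2 hE0
            _ = E t0 * ((2 * ρ ^ 2 + 1) * Real.exp (K2 * S0 * lam0)) *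
                Real.exp ((K2 * S0 + CB) * Real.sqrt (Real.log t)) := by ring
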